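/- Let i be a reduced word of an element w of S_{n+1} with word poset P_i. The map sending a linear extension p_1 p_2 ⋯ p_ℓ of P_i to the word (i_{p_1}, i_{p_2}, ..., i_{p_ℓ}) is a bijection from the set of linear extensions of P_i onto the commutation class of i; in particular, the size of the commutation class of i equals the number of linear extensions of P_i. -/

import Mathlib

open Equiv List

/-- The simple transposition `s_{c+1}` (0-based: swaps `c` and `c+1` in `Fin (n+1)`). -/
def simpleT (n c : ℕ) : Equiv.Perm (Fin (n + 1)) :=
  if h : c + 1 ≤ n then Equiv.swap ⟨c, by omega⟩ ⟨c + 1, by omega⟩ else 1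

/-- `l` is a word for the permutation `w` in `S_{n+1}`, with 0-based letters in `[0, n)`. -/
def IsWord (n : ℕ) (w : Equiv.Perm (Fin (n + 1))) (l : List ℕ) : Prop :=
  (∀ c ∈ l, c < n) ∧ (l.map (simpleT n)).prod = w

/-- The Coxeter length of `w`: minimal length of a word for `w`. -/
noncomputable def coxLen (n : ℕ) (w : Equiv.Perm (Fin (n + 1))) : ℕ :=
  sInf {r | ∃ l : List ℕ, l.length = r ∧ IsWord n w l}

/-- `l` is a reduced word of `w`. -/
def IsReducedWord (n : ℕ) (w : Equiv.Perm (Fin (n + 1))) (l : List ℕ) : Prop :=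
  IsWord n w l ∧ l.length = coxLen n w

/-- The longest element of `S_{n+1}`, sending (0-based) `i` to `n - i`. -/
def w0 (n : ℕ) : Equiv.Perm (Fin (n + 1)) :=
  ⟨Fin.rev, Fin.rev, Fin.rev_rev, Fin.rev_rev⟩

/-- The word poset relation of the word `l`: transitive closure of
`j ≤ k` and `|l_j - l_k| ≤ 1`. -/
def wordRel (l : List ℕ) : Fin l.length → Fin l.length → Prop :=
  Relation.ReflTransGen (fun j k => j ≤ k ∧ l.get j ≤ l.get k + 1 ∧ l.get k ≤ l.get j + 1)

/-- A 2-move (commutation). -/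
def CommMove (l l' : List ℕ) : Prop :=
  ∃ (u v : List ℕ) (a b : ℕ), (a + 1 < b ∨ b + 1 < a) ∧
    l = u ++ a :: b :: v ∧ l' = u ++ b :: a :: v

/-- Equivalence of words by sequences of 2-moves. -/
def CommEquiv : List ℕ → List ℕ → Prop := Relation.ReflTransGen CommMove

section Helpers

/-- The one-step relation underlying `wordRel`. -/
def wstep (l : List ℕ) (j k : Fin l.length) : Prop :=
  j ≤ k ∧ l.get j ≤ l.get k + 1 ∧ l.get k ≤ l.get j + 1

lemma wordRel_eq (l : List ℕ) : wordRel l = Relation.ReflTransGen (wstep l) := rfl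

lemma wordRel_le {l : List ℕ} {j k : Fin l.length} (h : wordRel l j k) : j ≤ k := by
  induction h with
  | refl => exact le_refl _
  | tail _ h2 ih => exact le_trans ih h2.1

lemma swap_val {ℓ p : ℕ} (h1 : p < ℓ) (h2 : p + 1 < ℓ) (j : Fin ℓ) :
    ((Equiv.swap (⟨p, h1⟩ : Fin ℓ) ⟨p + 1, h2⟩) j).val =
      if j.val = p then p + 1 else if j.val = p + 1 then p else j.val := by
  rcases j with ⟨jv, hj⟩
  rw [Equiv.swap_apply_def]
  split_ifs <;> simp_all [Fin.ext_iff]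

end Helpers
section Helpers2

lemma not_wordRel_far {l : List ℕ} {e : Equiv.Perm (Fin l.length)}
    (he : ∀ j k, wordRel l (e j) (e k) → j ≤ k)
    {p : ℕ} (h1 : p < l.length) (hp : p + 1 < l.length)
    (hfar : l.get (e ⟨p, h1⟩) + 1 < l.get (e ⟨p + 1, hp⟩) ∨
            l.get (e ⟨p + 1, hp⟩) + 1 < l.get (e ⟨p, h1⟩)) :
    ¬ wordRel l (e ⟨p, h1⟩) (e ⟨p + 1, hp⟩) := by
  intro h
  rw [wordRel_eq] at h
  have key : ∀ (x : Fin l.length), Relation.ReflTransGen (wstep l) x (e ⟨p + 1, hp⟩) →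
      x = e ⟨p, h1⟩ → False := by
    intro x hx
    induction hx using Relation.ReflTransGen.head_induction_on with
    | refl =>
      intro hxe
      have := e.injective hxe
      simp [Fin.ext_iff] at this
    | head h' hrest ih =>
      rename_i a c
      intro hxe
      subst hxe
      have hc : c = e (e.symm c) := (e.apply_symm_apply c).symm
      have hq1 : (⟨p, h1⟩ : Fin l.length) ≤ e.symm c := by
        apply he
        rw [← hc]
        exact Relation.ReflTransGen.single h'
      have hq2 : e.symm c ≤ (⟨p + 1, hp⟩ : Fin l.length) := by
        apply he
        rw [← hc]
        exact hrest
      have hv1 : p ≤ (e.symm c).val := by simpa [Fin.le_def] using hq1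
      have hv2 : (e.symm c).val ≤ p + 1 := by simpa [Fin.le_def] using hq2
      have hcase : e.symm c = (⟨p, h1⟩ : Fin l.length) ∨
          e.symm c = (⟨p + 1, hp⟩ : Fin l.length) := by
        rcases Nat.lt_or_ge (e.symm c).val (p + 1) with hh | hh
        · left; exact Fin.ext (by simp only [Fin.val_mk]; omega)
        · right; exact Fin.ext (by simp only [Fin.val_mk]; omega)
      rcases hcase with hcase | hcase
      · exact ih (by rw [hc, hcase])
      · have hc2 : c = e ⟨p + 1, hp⟩ := by rw [hc, hcase]
        rw [hc2] at h'
        obtain ⟨-, h2, h3⟩ := h'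
        omega
  exact key _ h rfl

lemma linext_mul_swap {l : List ℕ} {e : Equiv.Perm (Fin l.length)}
    (he : ∀ j k, wordRel l (e j) (e k) → j ≤ k)
    {p : ℕ} (h1 : p < l.length) (hp : p + 1 < l.length)
    (hnot : ¬ wordRel l (e ⟨p, h1⟩) (e ⟨p + 1, hp⟩)) :
    ∀ j k, wordRel l ((e * Equiv.swap (⟨p, h1⟩ : Fin l.length) ⟨p + 1, hp⟩) j)
      ((e * Equiv.swap (⟨p, h1⟩ : Fin l.length) ⟨p + 1, hp⟩) k) → j ≤ k := by
  intro j k hw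
  simp only [Equiv.Perm.mul_apply] at hw
  have hle := he _ _ hw
  by_contra hjk
  push_neg at hjk
  have sj := swap_val h1 hp j
  have sk := swap_val h1 hp k
  rw [Fin.le_def] at hle
  rw [Fin.lt_def] at hjk
  rw [sj, sk] at hle
  have hcase : j.val = p + 1 ∧ k.val = p := by split_ifs at hle <;> omega
  have hj' : j = (⟨p + 1, hp⟩ : Fin l.length) := Fin.ext hcase.1
  have hk' : k = (⟨p, h1⟩ : Fin l.length) := Fin.ext hcase.2
  rw [hj', hk', Equiv.swap_apply_right, Equiv.swap_apply_left] at hw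
  exact hnot hw

lemma eq_take_cons {α : Type*} (m : List α) (p : ℕ) (hp : p + 1 < m.length) :
    m = m.take p ++ m[p] :: m[p + 1] :: m.drop (p + 2) := by
  conv_lhs => rw [← List.take_append_drop p m]
  congr 1
  rw [List.drop_eq_getElem_cons (by omega), List.drop_eq_getElem_cons (by omega)]

lemma ofFn_comp_swap {ℓ : ℕ} (c : Fin ℓ → ℕ) {p : ℕ} (h1 : p < ℓ) (hp : p + 1 < ℓ) :
    List.ofFn (fun j => c (Equiv.swap (⟨p, h1⟩ : Fin ℓ) ⟨p + 1, hp⟩ j)) =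
      (List.ofFn c).take p ++ c ⟨p + 1, hp⟩ :: c ⟨p, h1⟩ :: (List.ofFn c).drop (p + 2) := by
  have key := eq_take_cons (List.ofFn (fun j => c (Equiv.swap (⟨p, h1⟩ : Fin ℓ) ⟨p + 1, hp⟩ j)))
    p (by simpa using hp)
  have e1 : (List.ofFn (fun j => c (Equiv.swap (⟨p, h1⟩ : Fin ℓ) ⟨p + 1, hp⟩ j)))[p]'(by
      simpa using h1) = c ⟨p + 1, hp⟩ := by
    rw [List.getElem_ofFn]
    congr 1
    exact Equiv.swap_apply_left _ _
  have e2 : (List.ofFn (fun j => c (Equiv.swap (⟨p, h1⟩ : Fin ℓ) ⟨p + 1, hp⟩ j)))[p + 1]'(by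
      simpa using hp) = c ⟨p, h1⟩ := by
    rw [List.getElem_ofFn]
    congr 1
    exact Equiv.swap_apply_right _ _
  have e3 : (List.ofFn (fun j => c (Equiv.swap (⟨p, h1⟩ : Fin ℓ) ⟨p + 1, hp⟩ j))).take p =
      (List.ofFn c).take p := by
    apply List.ext_getElem
    · simp
    · intro i hi1 hi2
      simp only [List.length_take, List.length_ofFn] at hi1
      rw [List.getElem_take, List.getElem_take, List.getElem_ofFn, List.getElem_ofFn]
      congr 1
      apply Equiv.swap_apply_of_ne_of_ne <;>
        · simp only [ne_eq, Fin.ext_iff]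
          omega
  have e4 : (List.ofFn (fun j => c (Equiv.swap (⟨p, h1⟩ : Fin ℓ) ⟨p + 1, hp⟩ j))).drop (p + 2) =
      (List.ofFn c).drop (p + 2) := by
    apply List.ext_getElem
    · simp
    · intro i hi1 hi2
      simp only [List.length_drop, List.length_ofFn] at hi1
      rw [List.getElem_drop, List.getElem_drop, List.getElem_ofFn, List.getElem_ofFn]
      congr 1
      apply Equiv.swap_apply_of_ne_of_ne <;>
        · simp only [ne_eq, Fin.ext_iff]
          omega
  rw [e1, e2, e3, e4] at key
  exact key

end Helpers2
section Helpers3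

/-- The inversion set of a permutation of `Fin ℓ`. -/
def invSet {ℓ : ℕ} (e : Equiv.Perm (Fin ℓ)) : Finset (Fin ℓ × Fin ℓ) :=
  Finset.univ.filter fun q => q.1 < q.2 ∧ e q.2 < e q.1

lemma invSet_card_lt {ℓ : ℕ} (e : Equiv.Perm (Fin ℓ)) {p : ℕ} (h1 : p < ℓ) (hp : p + 1 < ℓ)
    (hd : e ⟨p + 1, hp⟩ < e ⟨p, h1⟩) :
    (invSet (e * Equiv.swap (⟨p, h1⟩ : Fin ℓ) ⟨p + 1, hp⟩)).card < (invSet e).card := by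
  have hmem : ((⟨p, h1⟩, ⟨p + 1, hp⟩) : Fin ℓ × Fin ℓ) ∈ invSet e := by
    simp only [invSet, Finset.mem_filter, Finset.mem_univ, true_and]
    exact ⟨by simp [Fin.lt_def], hd⟩
  have hkey : ∀ q ∈ invSet (e * Equiv.swap (⟨p, h1⟩ : Fin ℓ) ⟨p + 1, hp⟩),
      Equiv.swap (⟨p, h1⟩ : Fin ℓ) ⟨p + 1, hp⟩ q.1 < Equiv.swap (⟨p, h1⟩ : Fin ℓ) ⟨p + 1, hp⟩ q.2 := by
    intro q hq
    simp only [invSet, Finset.mem_filter, Finset.mem_univ, true_and] at hq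
    simp only [Equiv.Perm.mul_apply] at hq
    obtain ⟨hq1, hq2⟩ := hq
    by_contra hle
    push_neg at hle
    have hne : Equiv.swap (⟨p, h1⟩ : Fin ℓ) ⟨p + 1, hp⟩ q.1 ≠
        Equiv.swap (⟨p, h1⟩ : Fin ℓ) ⟨p + 1, hp⟩ q.2 := by
      intro hh
      have := (Equiv.injective _) hh
      exact absurd this (ne_of_lt hq1)
    have hlt : Equiv.swap (⟨p, h1⟩ : Fin ℓ) ⟨p + 1, hp⟩ q.2 <
        Equiv.swap (⟨p, h1⟩ : Fin ℓ) ⟨p + 1, hp⟩ q.1 := lt_of_le_of_ne hle (Ne.symm hne)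
    have s1 := swap_val h1 hp q.1
    have s2 := swap_val h1 hp q.2
    rw [Fin.lt_def] at hq1 hlt
    rw [s1, s2] at hlt
    have hcase : q.1.val = p ∧ q.2.val = p + 1 := by split_ifs at hlt <;> omega
    have hq1' : q.1 = (⟨p, h1⟩ : Fin ℓ) := Fin.ext hcase.1
    have hq2' : q.2 = (⟨p + 1, hp⟩ : Fin ℓ) := Fin.ext hcase.2
    rw [hq1', hq2', Equiv.swap_apply_left, Equiv.swap_apply_right] at hq2
    exact absurd hq2 (not_lt_of_gt hd)
  have hmap : ∀ q ∈ invSet (e * Equiv.swap (⟨p, h1⟩ : Fin ℓ) ⟨p + 1, hp⟩),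
      (Equiv.swap (⟨p, h1⟩ : Fin ℓ) ⟨p + 1, hp⟩ q.1,
        Equiv.swap (⟨p, h1⟩ : Fin ℓ) ⟨p + 1, hp⟩ q.2) ∈
        (invSet e).erase ((⟨p, h1⟩, ⟨p + 1, hp⟩) : Fin ℓ × Fin ℓ) := by
    intro q hq
    have hlt := hkey q hq
    simp only [invSet, Finset.mem_filter, Finset.mem_univ, true_and] at hq
    simp only [Equiv.Perm.mul_apply] at hq
    rw [Finset.mem_erase]
    constructor
    · intro hh
      rw [Prod.mk.injEq] at hh
      have ha : q.1 = (⟨p + 1, hp⟩ : Fin ℓ) := by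
        have := congrArg (Equiv.swap (⟨p, h1⟩ : Fin ℓ) ⟨p + 1, hp⟩) hh.1
        rwa [Equiv.swap_apply_self, Equiv.swap_apply_left] at this
      have hb : q.2 = (⟨p, h1⟩ : Fin ℓ) := by
        have := congrArg (Equiv.swap (⟨p, h1⟩ : Fin ℓ) ⟨p + 1, hp⟩) hh.2
        rwa [Equiv.swap_apply_self, Equiv.swap_apply_right] at this
      have := hq.1
      rw [ha, hb, Fin.lt_def] at this
      simp at this
    · simp only [invSet, Finset.mem_filter, Finset.mem_univ, true_and]
      exact ⟨hlt, hq.2⟩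
  have hinj : Set.InjOn
      (fun q : Fin ℓ × Fin ℓ => (Equiv.swap (⟨p, h1⟩ : Fin ℓ) ⟨p + 1, hp⟩ q.1,
        Equiv.swap (⟨p, h1⟩ : Fin ℓ) ⟨p + 1, hp⟩ q.2))
      (invSet (e * Equiv.swap (⟨p, h1⟩ : Fin ℓ) ⟨p + 1, hp⟩)) := by
    intro q _ q' _ hh
    simp only [Prod.mk.injEq] at hh
    exact Prod.ext ((Equiv.injective _) hh.1) ((Equiv.injective _) hh.2)
  calc (invSet (e * Equiv.swap (⟨p, h1⟩ : Fin ℓ) ⟨p + 1, hp⟩)).card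
      ≤ ((invSet e).erase ((⟨p, h1⟩, ⟨p + 1, hp⟩) : Fin ℓ × Fin ℓ)).card :=
        Finset.card_le_card_of_injOn _ hmap hinj
    _ = (invSet e).card - 1 := Finset.card_erase_of_mem hmem
    _ < (invSet e).card := Nat.sub_lt (Finset.card_pos.mpr ⟨_, hmem⟩) one_pos

lemma perm_eq_one_of_no_descent {ℓ : ℕ} (e : Equiv.Perm (Fin ℓ))
    (h : ∀ (p : ℕ) (h1 : p < ℓ) (hp : p + 1 < ℓ), e ⟨p, h1⟩ ≤ e ⟨p + 1, hp⟩) : e = 1 := by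
  have hmono : Monotone e := by
    have step : ∀ (d : ℕ) (jv : ℕ) (hj : jv < ℓ) (hk : jv + d < ℓ),
        e ⟨jv, hj⟩ ≤ e ⟨jv + d, hk⟩ := by
      intro d
      induction d with
      | zero => intro jv hj hk; exact le_refl _
      | succ d ih =>
        intro jv hj hk
        have h2 : jv + d < ℓ := by omega
        exact le_trans (ih jv hj h2) (by
          have := h (jv + d) h2 (by omega)
          exact this)
    intro j k hjk
    rcases j with ⟨jv, hj⟩
    rcases k with ⟨kv, hk⟩
    rw [Fin.le_def] at hjk
    simp only [Fin.val_mk] at hjk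
    have : kv = jv + (kv - jv) := by omega
    have hle := step (kv - jv) jv hj (by omega)
    rw [show (⟨kv, hk⟩ : Fin ℓ) = ⟨jv + (kv - jv), by omega⟩ from
      Fin.ext (show kv = jv + (kv - jv) by omega)]
    exact hle
  have hsm : StrictMono e := hmono.strictMono_of_injective e.injective
  have hid : (e : Fin ℓ → Fin ℓ) = id := by
    apply (StrictMono.range_inj hsm strictMono_id).mp
    rw [Set.range_id]
    exact Set.range_eq_univ.mpr e.surjective
  exact Equiv.ext fun j => congrFun hid j

lemma exists_descent {ℓ : ℕ} (e : Equiv.Perm (Fin ℓ)) (hne : e ≠ 1) :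
    ∃ (p : ℕ) (h1 : p < ℓ) (hp : p + 1 < ℓ), e ⟨p + 1, hp⟩ < e ⟨p, h1⟩ := by
  by_contra hh
  push_neg at hh
  exact hne (perm_eq_one_of_no_descent e fun p h1 hp => hh p h1 hp)

end Helpers3
section Helpers4

lemma descent_far {l : List ℕ} {e : Equiv.Perm (Fin l.length)}
    (he : ∀ j k, wordRel l (e j) (e k) → j ≤ k)
    {p : ℕ} (h1 : p < l.length) (hp : p + 1 < l.length)
    (hd : e ⟨p + 1, hp⟩ < e ⟨p, h1⟩) :
    l.get (e ⟨p, h1⟩) + 1 < l.get (e ⟨p + 1, hp⟩) ∨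
      l.get (e ⟨p + 1, hp⟩) + 1 < l.get (e ⟨p, h1⟩) := by
  by_contra hh
  push_neg at hh
  have hstep : wstep l (e ⟨p + 1, hp⟩) (e ⟨p, h1⟩) :=
    ⟨le_of_lt hd, by omega, by omega⟩
  have := he _ _ (Relation.ReflTransGen.single hstep)
  rw [Fin.le_def] at this
  simp at this

lemma mapsTo_aux (N : ℕ) : ∀ (l : List ℕ) (e : Equiv.Perm (Fin l.length)),
    (invSet e).card ≤ N → (∀ j k, wordRel l (e j) (e k) → j ≤ k) →
    CommEquiv l (List.ofFn fun j => l.get (e j)) := by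
  induction N using Nat.strong_induction_on with
  | _ N ih =>
    intro l e hcard he
    by_cases hone : e = 1
    · subst hone
      have : (List.ofFn fun j => l.get ((1 : Equiv.Perm (Fin l.length)) j)) = l := by
        simp only [Equiv.Perm.one_apply]
        exact List.ofFn_get l
      rw [this]
      exact Relation.ReflTransGen.refl
    · obtain ⟨p, h1, hp, hd⟩ := exists_descent e hone
      have hfar := descent_far he h1 hp hd
      have hnot : ¬ wordRel l (e ⟨p, h1⟩) (e ⟨p + 1, hp⟩) := by
        intro hw
        have := wordRel_le hw
        exact absurd hd (not_lt_of_ge this)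
      have he'' := linext_mul_swap he h1 hp hnot
      have hlt := invSet_card_lt e h1 hp hd
      have hN : 1 ≤ N := by omega
      have hstep := ih (N - 1) (by omega) l
        (e * Equiv.swap (⟨p, h1⟩ : Fin l.length) ⟨p + 1, hp⟩) (by omega) he''
      refine Relation.ReflTransGen.tail hstep ?_
      refine ⟨(List.ofFn fun j => l.get (e j)).take p,
        (List.ofFn fun j => l.get (e j)).drop (p + 2),
        l.get (e ⟨p + 1, hp⟩), l.get (e ⟨p, h1⟩), by tauto, ?_, ?_⟩
      · have : (List.ofFn fun j => l.get
            ((e * Equiv.swap (⟨p, h1⟩ : Fin l.length) ⟨p + 1, hp⟩) j)) =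
            List.ofFn fun j => (fun x => l.get (e x))
              (Equiv.swap (⟨p, h1⟩ : Fin l.length) ⟨p + 1, hp⟩ j) := rfl
        rw [this, ofFn_comp_swap (fun x => l.get (e x)) h1 hp]
      · have key := eq_take_cons (List.ofFn fun j => l.get (e j)) p (by simpa using hp)
        have e1 : (List.ofFn fun j => l.get (e j))[p]'(by simpa using h1) =
            l.get (e ⟨p, h1⟩) := by rw [List.getElem_ofFn]
        have e2 : (List.ofFn fun j => l.get (e j))[p + 1]'(by simpa using hp) =
            l.get (e ⟨p + 1, hp⟩) := by rw [List.getElem_ofFn]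
        rw [e1, e2] at key
        exact key

lemma surj_aux (l m : List ℕ) (hm : CommEquiv l m) :
    ∃ e : Equiv.Perm (Fin l.length), (∀ j k, wordRel l (e j) (e k) → j ≤ k) ∧
      (List.ofFn fun j => l.get (e j)) = m := by
  induction hm with
  | refl =>
    refine ⟨1, fun j k hw => ?_, ?_⟩
    · have := wordRel_le hw
      simpa using this
    · simp only [Equiv.Perm.one_apply]
      exact List.ofFn_get l
  | tail hab hmove ih =>
    rename_i b c
    obtain ⟨e, he, hofn⟩ := ih
    obtain ⟨u, v, x, y, hxy, hb, hc⟩ := hmove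
    have hlenb : b.length = l.length := by rw [← hofn]; simp
    have hlen : l.length = u.length + (2 + v.length) := by
      rw [← hlenb, hb]; simp; omega
    have hp : u.length + 1 < l.length := by omega
    have h1 : u.length < l.length := by omega
    have hgp : (List.ofFn fun j => l.get (e j))[u.length]'(by simpa using h1) =
        l.get (e ⟨u.length, h1⟩) := by rw [List.getElem_ofFn]
    have hgp1 : (List.ofFn fun j => l.get (e j))[u.length + 1]'(by simpa using hp) =
        l.get (e ⟨u.length + 1, hp⟩) := by rw [List.getElem_ofFn]
    have hbx : b[u.length]'(by omega) = x := by
      rw [List.getElem_of_eq hb, List.getElem_append]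
      simp
    have hby : b[u.length + 1]'(by omega) = y := by
      rw [List.getElem_of_eq hb, List.getElem_append]
      rw [dif_neg (by omega)]
      have hone : u.length + 1 - u.length = 1 := by omega
      simp [hone]
    have hx : l.get (e ⟨u.length, h1⟩) = x := by
      rw [← hgp, List.getElem_of_eq hofn]; exact hbx
    have hy : l.get (e ⟨u.length + 1, hp⟩) = y := by
      rw [← hgp1, List.getElem_of_eq hofn]; exact hby
    have hfar : l.get (e ⟨u.length, h1⟩) + 1 < l.get (e ⟨u.length + 1, hp⟩) ∨
        l.get (e ⟨u.length + 1, hp⟩) + 1 < l.get (e ⟨u.length, h1⟩) := by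
      rw [hx, hy]; tauto
    have hnot := not_wordRel_far he h1 hp hfar
    refine ⟨e * Equiv.swap (⟨u.length, h1⟩ : Fin l.length) ⟨u.length + 1, hp⟩,
      linext_mul_swap he h1 hp hnot, ?_⟩
    have hrw : (List.ofFn fun j => l.get
        ((e * Equiv.swap (⟨u.length, h1⟩ : Fin l.length) ⟨u.length + 1, hp⟩) j)) =
        List.ofFn fun j => (fun x => l.get (e x))
          (Equiv.swap (⟨u.length, h1⟩ : Fin l.length) ⟨u.length + 1, hp⟩ j) := rfl
    rw [hrw, ofFn_comp_swap (fun x => l.get (e x)) h1 hp, hx, hy, hofn, hb, hc]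
    have htake : (u ++ x :: y :: v).take u.length = u := by
      have := List.take_left (l₁ := u) (l₂ := x :: y :: v)
      simpa using this
    have hdrop : (u ++ x :: y :: v).drop (u.length + 2) = v := by
      have h2 : u ++ x :: y :: v = (u ++ [x, y]) ++ v := by simp
      rw [h2]
      have h3 : (u ++ [x, y]).length = u.length + 2 := by simp
      rw [← h3]
      exact List.drop_left
    rw [htake, hdrop]

end Helpers4
section Helpers5

lemma inj_aux (l : List ℕ) {e e' : Equiv.Perm (Fin l.length)}
    (he : ∀ j k, wordRel l (e j) (e k) → j ≤ k)
    (he' : ∀ j k, wordRel l (e' j) (e' k) → j ≤ k)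
    (heq : (List.ofFn fun j => l.get (e j)) = List.ofFn fun j => l.get (e' j)) : e = e' := by
  have hfun : (fun j => l.get (e j)) = fun j => l.get (e' j) := List.ofFn_inj.mp heq
  have hval : ∀ j, l.get (e j) = l.get (e' j) := fun j => congrFun hfun j
  have key : ∀ (jv : ℕ) (hj : jv < l.length), e ⟨jv, hj⟩ = e' ⟨jv, hj⟩ := by
    intro jv
    induction jv using Nat.strong_induction_on with
    | _ jv ih =>
      intro hj
      by_contra hne
      rcases lt_or_gt_of_ne hne with hlt | hlt
      · have hstep : wstep l (e ⟨jv, hj⟩) (e' ⟨jv, hj⟩) :=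
          ⟨le_of_lt hlt, by rw [hval ⟨jv, hj⟩]; omega, by rw [hval ⟨jv, hj⟩]; omega⟩
        have hk1 : e' (e'.symm (e ⟨jv, hj⟩)) = e ⟨jv, hj⟩ := e'.apply_symm_apply _
        have h2 : e'.symm (e ⟨jv, hj⟩) ≤ ⟨jv, hj⟩ := by
          apply he'
          rw [hk1]
          exact Relation.ReflTransGen.single hstep
        have hkj : e'.symm (e ⟨jv, hj⟩) ≠ ⟨jv, hj⟩ := by
          intro hh
          rw [hh] at hk1
          exact (ne_of_lt hlt) hk1.symm
        have hklt : (e'.symm (e ⟨jv, hj⟩)).val < jv := by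
          have hv := Fin.le_def.mp h2
          have hvne : (e'.symm (e ⟨jv, hj⟩)).val ≠ jv := fun hh => hkj (Fin.ext hh)
          simp only [Fin.val_mk] at hv
          omega
        have hek : e (e'.symm (e ⟨jv, hj⟩)) = e' (e'.symm (e ⟨jv, hj⟩)) :=
          ih _ hklt (e'.symm (e ⟨jv, hj⟩)).isLt
        exact hkj (e.injective (hek.trans hk1))
      · have hstep : wstep l (e' ⟨jv, hj⟩) (e ⟨jv, hj⟩) :=
          ⟨le_of_lt hlt, by rw [hval ⟨jv, hj⟩]; omega, by rw [hval ⟨jv, hj⟩]; omega⟩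
        have hk1 : e (e.symm (e' ⟨jv, hj⟩)) = e' ⟨jv, hj⟩ := e.apply_symm_apply _
        have h2 : e.symm (e' ⟨jv, hj⟩) ≤ ⟨jv, hj⟩ := by
          apply he
          rw [hk1]
          exact Relation.ReflTransGen.single hstep
        have hkj : e.symm (e' ⟨jv, hj⟩) ≠ ⟨jv, hj⟩ := by
          intro hh
          rw [hh] at hk1
          exact (ne_of_lt hlt) hk1.symm
        have hklt : (e.symm (e' ⟨jv, hj⟩)).val < jv := by
          have hv := Fin.le_def.mp h2
          have hvne : (e.symm (e' ⟨jv, hj⟩)).val ≠ jv := fun hh => hkj (Fin.ext hh)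
          simp only [Fin.val_mk] at hv
          omega
        have hek : e (e.symm (e' ⟨jv, hj⟩)) = e' (e.symm (e' ⟨jv, hj⟩)) :=
          ih _ hklt (e.symm (e' ⟨jv, hj⟩)).isLt
        exact hkj (e'.injective (hek.symm.trans hk1))
  apply Equiv.ext
  intro j
  rcases j with ⟨jv, hj⟩
  exact key jv hj

end Helpers5

/-- The map sending a linear extension `p₁ ⋯ p_ℓ` of the word poset of a reduced
word `l` to the word `(l_{p₁}, ..., l_{p_ℓ})` is a bijection from the set of
linear extensions of the word poset of `l` onto the commutation class of `l`;
in particular the size of the commutation class equals the number of linear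
extensions. -/
theorem linear_extensions_bijOn_commClass (n : ℕ) (w : Equiv.Perm (Fin (n + 1)))
    (l : List ℕ) (h : IsReducedWord n w l) :
    Set.BijOn (fun e : Equiv.Perm (Fin l.length) => List.ofFn (fun j => l.get (e j)))
      {e | ∀ j k, wordRel l (e j) (e k) → j ≤ k}
      {m | CommEquiv l m} ∧
    Nat.card {m : List ℕ // CommEquiv l m} =
      Nat.card {e : Equiv.Perm (Fin l.length) // ∀ j k, wordRel l (e j) (e k) → j ≤ k} := by
  have bij : Set.BijOn (fun e : Equiv.Perm (Fin l.length) => List.ofFn (fun j => l.get (e j)))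
      {e | ∀ j k, wordRel l (e j) (e k) → j ≤ k}
      {m | CommEquiv l m} := by
    refine ⟨?_, ?_, ?_⟩
    · intro e he
      exact mapsTo_aux (invSet e).card l e le_rfl he
    · intro e he e' he' heq
      exact inj_aux l he he' heq
    · intro m hm
      obtain ⟨e, he, hofn⟩ := surj_aux l m hm
      exact ⟨e, he, hofn⟩
  exact ⟨bij, Nat.card_congr (Set.BijOn.equiv _ bij).symm⟩
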